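/- Let 𝒫 be a finite set partitioned into a finite nonempty collection 𝒢 of pairwise disjoint nonempty subsets (groups), let c : 𝒫 → ℝ, and let (X_P)_{P∈𝒫} be square-integrable real random variables with means μ_P = 𝔼[X_P]. Let π : 𝒢 → ℝ with π_G > 0 for all G and ∑_G π_G = 1, and let I be a 𝒢-valued random variable with ℙ(I = G) = π_G, independent of the family (X_P). Then the estimator Y = (1/π_I) ∑_{P∈I} c_P X_P has variance Var(Y) = ∑_{G∈𝒢} (1/π_G) 𝔼[(∑_{P∈G} c_P X_P)²] − (∑_{P∈𝒫} c_P μ_P)². -/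

import Mathlib

namespace Stmt9

open MeasureTheory ProbabilityTheory

/-- For a partition of a finite set `𝒫` into a finite nonempty collection `𝒢` of pairwise
disjoint nonempty groups, square-integrable random variables `(X_P)` with means `μ_P`, a
sampling distribution `π` on `𝒢` with strictly positive weights, and a `𝒢`-valued sampling
variable `I` with law `π` independent of the family `(X_P)`, the estimator
`Y = (1/π_I) ∑_{P∈I} c_P X_P` has variance
`∑_{G∈𝒢} (1/π_G) 𝔼[(∑_{P∈G} c_P X_P)²] − (∑_{P∈𝒫} c_P μ_P)²`. -/
theorem grouped_horvitzThompson_variance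
    {Ω : Type*} [MeasurableSpace Ω] (Pr : Measure Ω) [IsProbabilityMeasure Pr]
    {ι : Type*} [Fintype ι] [DecidableEq ι]
    (𝒢 : Finset (Finset ι)) (h𝒢ne : 𝒢.Nonempty)
    (hGne : ∀ G ∈ 𝒢, G.Nonempty)
    (hdisj : ∀ G ∈ 𝒢, ∀ G' ∈ 𝒢, G ≠ G' → Disjoint G G')
    (hcover : ∀ P : ι, ∃ G ∈ 𝒢, P ∈ G)
    (c : ι → ℝ) (X : ι → Ω → ℝ)
    (hXmeas : ∀ P, Measurable (X P))
    (hX2 : ∀ P, MemLp (X P) 2 Pr)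
    (μ : ι → ℝ) (hμ : ∀ P, μ P = ∫ ω, X P ω ∂Pr)
    (π : Finset ι → ℝ) (hπpos : ∀ G ∈ 𝒢, 0 < π G) (hπsum : ∑ G ∈ 𝒢, π G = 1)
    (I : Ω → Finset ι) (hImem : ∀ ω, I ω ∈ 𝒢)
    (hImeas : ∀ G : Finset ι, MeasurableSet (I ⁻¹' {G}))
    (hlaw : ∀ G ∈ 𝒢, Pr (I ⁻¹' {G}) = ENNReal.ofReal (π G))
    (hindep : Indep (MeasurableSpace.comap I ⊤)
      (⨆ P, MeasurableSpace.comap (X P) inferInstance) Pr) :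
    variance (fun ω => (1 / π (I ω)) * ∑ P ∈ I ω, c P * X P ω) Pr
      = ∑ G ∈ 𝒢, (1 / π G) * (∫ ω, (∑ P ∈ G, c P * X P ω) ^ 2 ∂Pr)
        - (∑ P, c P * μ P) ^ 2 := by
  classical
  set S : Finset ι → Ω → ℝ := fun G ω => ∑ P ∈ G, c P * X P ω with hSdef
  have hXm₂ : ∀ P, Measurable[⨆ P, MeasurableSpace.comap (X P) inferInstance] (X P) := by
    intro P
    exact measurable_iff_comap_le.mpr
      (le_iSup (fun P => MeasurableSpace.comap (X P) inferInstance) P)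
  have hSm₂ : ∀ G, Measurable[⨆ P, MeasurableSpace.comap (X P) inferInstance] (S G) :=
    fun G => Finset.measurable_sum G fun P _ => ((hXm₂ P).const_mul (c P))
  have hS2 : ∀ G, MemLp (S G) 2 Pr :=
    fun G => memLp_finset_sum G fun P _ => (hX2 P).const_mul (c P)
  have hSint : ∀ G, Integrable (S G) Pr := fun G => (hS2 G).integrable one_le_two
  have hSsqint : ∀ G, Integrable (fun ω => S G ω ^ 2) Pr := fun G => (hS2 G).integrable_sq
  -- key independence computation
  have key : ∀ G ∈ 𝒢, ∀ g : Ω → ℝ,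
      Measurable[⨆ P, MeasurableSpace.comap (X P) inferInstance] g → Integrable g Pr →
      ∫ ω, Set.indicator (I ⁻¹' {G}) g ω ∂Pr = π G * ∫ ω, g ω ∂Pr := by
    intro G hG g hgm hgint
    have hA : MeasurableSet[MeasurableSpace.comap I ⊤] (I ⁻¹' {G}) := ⟨{G}, trivial, rfl⟩
    set f : Ω → ℝ := (I ⁻¹' {G}).indicator (fun _ => (1 : ℝ)) with hf
    have hfm1 : Measurable[MeasurableSpace.comap I ⊤] f :=
      Measurable.indicator measurable_const hA
    have hgle : MeasurableSpace.comap g inferInstance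
        ≤ ⨆ P, MeasurableSpace.comap (X P) inferInstance := by
      rintro s ⟨t, ht, rfl⟩; exact hgm ht
    have hfle : MeasurableSpace.comap f inferInstance ≤ MeasurableSpace.comap I ⊤ := by
      rintro s ⟨t, ht, rfl⟩; exact hfm1 ht
    have hIndep : IndepFun f g Pr :=
      indep_of_indep_of_le_left (indep_of_indep_of_le_right hindep hgle) hfle
    have hfint : Integrable f Pr := (integrable_const (1 : ℝ)).indicator (hImeas G)
    have h1 : ∫ ω, (f * g) ω ∂Pr = (∫ ω, f ω ∂Pr) * ∫ ω, g ω ∂Pr :=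
      hIndep.integral_mul_eq_mul_integral hfint.aestronglyMeasurable hgint.aestronglyMeasurable
    have h2 : ∫ ω, f ω ∂Pr = π G := by
      rw [hf, integral_indicator_const (1 : ℝ) (hImeas G), measureReal_def, hlaw G hG]
      simp [ENNReal.toReal_ofReal (hπpos G hG).le]
    have h3 : ∀ ω, Set.indicator (I ⁻¹' {G}) g ω = (f * g) ω := by
      intro ω
      by_cases h : ω ∈ I ⁻¹' {G} <;> simp [hf, h]
    calc ∫ ω, Set.indicator (I ⁻¹' {G}) g ω ∂Pr = ∫ ω, (f * g) ω ∂Pr := by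
          simp_rw [h3]
      _ = (∫ ω, f ω ∂Pr) * ∫ ω, g ω ∂Pr := h1
      _ = π G * ∫ ω, g ω ∂Pr := by rw [h2]
  -- partition sum
  have hbi : 𝒢.biUnion id = Finset.univ := by
    apply Finset.eq_univ_iff_forall.mpr
    intro P
    obtain ⟨G, hG, hP⟩ := hcover P
    exact Finset.mem_biUnion.mpr ⟨G, hG, hP⟩
  have hpd : (↑𝒢 : Set (Finset ι)).PairwiseDisjoint id := by
    intro G hG G' hG' hne
    exact hdisj G (by simpa using hG) G' (by simpa using hG') hne
  have hsum_groups : ∀ fn : ι → ℝ, ∑ G ∈ 𝒢, ∑ P ∈ G, fn P = ∑ P, fn P := by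
    intro fn
    rw [← hbi]
    exact (Finset.sum_biUnion hpd).symm
  -- representation of Y and Y²
  have hYrep : ∀ ω, (1 / π (I ω)) * S (I ω) ω
      = ∑ G ∈ 𝒢, Set.indicator (I ⁻¹' {G}) (fun ω => (1 / π G) * S G ω) ω := by
    intro ω
    have h0 : ∀ G ∈ 𝒢, G ≠ I ω →
        Set.indicator (I ⁻¹' {G}) (fun ω => (1 / π G) * S G ω) ω = 0 := by
      intro G _ hne
      apply Set.indicator_of_notMem
      intro h
      exact hne (show I ω = G from h).symm
    rw [Finset.sum_eq_single_of_mem (I ω) (hImem ω) h0,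
      Set.indicator_of_mem (show ω ∈ I ⁻¹' {I ω} from rfl)]
  have hY2rep : ∀ ω, ((1 / π (I ω)) * S (I ω) ω) ^ 2
      = ∑ G ∈ 𝒢, Set.indicator (I ⁻¹' {G}) (fun ω => (1 / π G) ^ 2 * S G ω ^ 2) ω := by
    intro ω
    have h0 : ∀ G ∈ 𝒢, G ≠ I ω →
        Set.indicator (I ⁻¹' {G}) (fun ω => (1 / π G) ^ 2 * S G ω ^ 2) ω = 0 := by
      intro G _ hne
      apply Set.indicator_of_notMem
      intro h
      exact hne (show I ω = G from h).symm
    rw [Finset.sum_eq_single_of_mem (I ω) (hImem ω) h0,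
      Set.indicator_of_mem (show ω ∈ I ⁻¹' {I ω} from rfl), mul_pow]
  -- membership in L²
  have hYmem : MemLp (fun ω => (1 / π (I ω)) * S (I ω) ω) 2 Pr := by
    rw [show (fun ω => (1 / π (I ω)) * S (I ω) ω)
        = fun ω => ∑ G ∈ 𝒢, Set.indicator (I ⁻¹' {G}) (fun ω => (1 / π G) * S G ω) ω
        from funext hYrep]
    exact memLp_finset_sum _ fun G _ => ((hS2 G).const_mul _).indicator (hImeas G)
  -- expectation of Y
  have hEY : ∫ ω, (1 / π (I ω)) * S (I ω) ω ∂Pr = ∑ P, c P * μ P := by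
    rw [show (fun ω => (1 / π (I ω)) * S (I ω) ω)
        = fun ω => ∑ G ∈ 𝒢, Set.indicator (I ⁻¹' {G}) (fun ω => (1 / π G) * S G ω) ω
        from funext hYrep]
    rw [integral_finset_sum _ fun G _ => ((hSint G).const_mul _).indicator (hImeas G)]
    have hterm : ∀ G ∈ 𝒢,
        ∫ ω, Set.indicator (I ⁻¹' {G}) (fun ω => (1 / π G) * S G ω) ω ∂Pr
          = ∑ P ∈ G, c P * μ P := by
      intro G hG
      rw [key G hG _ ((hSm₂ G).const_mul _) ((hSint G).const_mul _), integral_const_mul]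
      have hES : ∫ ω, S G ω ∂Pr = ∑ P ∈ G, c P * μ P := by
        simp only [hSdef]
        rw [integral_finset_sum _ fun P _ => ((hX2 P).integrable one_le_two).const_mul (c P)]
        exact Finset.sum_congr rfl fun P _ => by rw [integral_const_mul, hμ P]
      rw [hES]
      have hne : π G ≠ 0 := (hπpos G hG).ne'
      field_simp
    rw [Finset.sum_congr rfl hterm, hsum_groups]
  -- expectation of Y²
  have hEY2 : ∫ ω, ((1 / π (I ω)) * S (I ω) ω) ^ 2 ∂Pr
      = ∑ G ∈ 𝒢, (1 / π G) * ∫ ω, S G ω ^ 2 ∂Pr := by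
    rw [show (fun ω => ((1 / π (I ω)) * S (I ω) ω) ^ 2)
        = fun ω => ∑ G ∈ 𝒢, Set.indicator (I ⁻¹' {G}) (fun ω => (1 / π G) ^ 2 * S G ω ^ 2) ω
        from funext hY2rep]
    rw [integral_finset_sum _ fun G _ => ((hSsqint G).const_mul _).indicator (hImeas G)]
    refine Finset.sum_congr rfl fun G hG => ?_
    rw [key G hG _ (((hSm₂ G).pow_const 2).const_mul _) ((hSsqint G).const_mul _),
      integral_const_mul]
    have hne : π G ≠ 0 := (hπpos G hG).ne'
    field_simp
  rw [variance_eq_sub hYmem]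
  have hpow : ((fun ω => (1 / π (I ω)) * S (I ω) ω) ^ 2)
      = fun ω => ((1 / π (I ω)) * S (I ω) ω) ^ 2 := rfl
  rw [hpow, hEY2, hEY]

end Stmt9
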